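/- For every PGLD program P = u_1;...;u_k, the thread |pgldpga(P)| extracted from the PGA program pgldpga(P) equals the behaviour of P, where pgldpga(u_1;...;u_k) = (ψ_1(u_1);...;ψ_k(u_k);!;!)^ω and, for 1 ≤ j ≤ k: ψ_j(##l) = #(l − j) if j ≤ l ≤ k, ψ_j(##l) = #(k + 2 − (j − l)) if 0 < l < j, ψ_j(##l) = ! if l = 0 or l > k, and ψ_j(u) = u if u is not a jump instruction. -/

import Mathlib

inductive FinThread (A : Type) : Type where
  | dead : FinThread A
  | term : FinThread A
  | pcc : FinThread A → A → FinThread A → FinThread A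

namespace FinThread
def proj {A : Type} : ℕ → FinThread A → FinThread A
  | 0, _ => .dead
  | _ + 1, .dead => .dead
  | _ + 1, .term => .term
  | n + 1, .pcc x a y => .pcc (proj n x) a (proj n y)
end FinThread

structure Thread (A : Type) : Type where
  approx : ℕ → FinThread A
  coh : ∀ n, FinThread.proj n (approx (n + 1)) = approx n

/-- One step of behaviour over a state space `S`: inaction, termination, or
performing an action `a` with a state for the positive and one for the
negative reply. -/
inductive Step (A S : Type) : Type where
  | dead : Step A S
  | term : Step A S
  | node : S → A → S → Step A S

def stepApply {A S : Type} (g : S → FinThread A) : Step A S → FinThread A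
  | .dead => .dead
  | .term => .term
  | .node s1 a s2 => .pcc (g s1) a (g s2)

/-- Approximations up to a given depth of the behaviour of a coalgebra. -/
def unfoldAux {A S : Type} (f : S → Step A S) : ℕ → S → FinThread A
  | 0, _ => .dead
  | n + 1, s => stepApply (unfoldAux f n) (f s)

theorem proj_unfoldAux {A S : Type} (f : S → Step A S) :
    ∀ (n : ℕ) (s : S), FinThread.proj n (unfoldAux f (n + 1) s) = unfoldAux f n s := by
  intro n
  induction n with
  | zero => intro s; rfl
  | succ n ih =>
    intro s
    show FinThread.proj (n + 1) (stepApply (unfoldAux f (n + 1)) (f s)) =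
      stepApply (unfoldAux f n) (f s)
    cases h : f s <;> simp [stepApply, FinThread.proj, ih]

/-- The thread (element of the projective limit model) produced by a state of
a coalgebra. -/
def Thread.unfold {A S : Type} (f : S → Step A S) (s : S) : Thread A :=
  ⟨fun n => unfoldAux f n s, fun n => proj_unfoldAux f n s⟩

namespace Thread

/-- Inaction D, lifted componentwise to the projective limit model. -/
def dead (A : Type) : Thread A :=
  ⟨fun _ => .dead, by intro n; cases n <;> rfl⟩

/-- Termination S, lifted componentwise to the projective limit model. -/
def term (A : Type) : Thread A :=
  ⟨fun n => match n with | 0 => .dead | _ + 1 => .term,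
   by intro n; cases n <;> rfl⟩

/-- Postconditional composition, lifted componentwise (cutting each component
to the appropriate depth) to the projective limit model. -/
def pcc {A : Type} (x : Thread A) (a : A) (y : Thread A) : Thread A where
  approx := fun n => match n with
    | 0 => .dead
    | n + 1 => .pcc (x.approx n) a (y.approx n)
  coh := by
    intro n
    cases n with
    | zero => rfl
    | succ n =>
      show FinThread.proj (n + 1) (.pcc (x.approx (n + 1)) a (y.approx (n + 1))) =
        FinThread.pcc (x.approx n) a (y.approx n)
      simp [FinThread.proj, x.coh n, y.coh n]

end Thread

inductive PrimInstr (B : Type) : Type where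
  | basic : B → PrimInstr B
  | postest : B → PrimInstr B
  | negtest : B → PrimInstr B
  | jump : ℕ → PrimInstr B
  | halt : PrimInstr B

inductive PGA (I : Type) : Type where
  | instr : I → PGA I
  | concat : PGA I → PGA I → PGA I
  | rep : PGA I → PGA I

def InstrSeq (I : Type) : Type := List I ⊕ (ℕ → I)

namespace PGA
def den {I : Type} : PGA I → InstrSeq I
  | .instr u => Sum.inl [u]
  | .concat P Q =>
    match P.den with
    | Sum.inl l =>
      match Q.den with
      | Sum.inl l' => Sum.inl (l ++ l')
      | Sum.inr f => Sum.inr (fun n => if n < l.length then l.getD n (f 0) else f (n - l.length))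
    | Sum.inr f => Sum.inr f
  | .rep P =>
    match P.den with
    | Sum.inl [] => Sum.inl []
    | Sum.inl (a :: l) => Sum.inr (fun n => (a :: l).getD (n % (a :: l).length) a)
    | Sum.inr f => Sum.inr f
end PGA

/-- The instruction at each position (0-based) of an instruction sequence,
`none` past the end of a finite sequence. -/
def InstrSeq.toFun {I : Type} : InstrSeq I → ℕ → Option I
  | Sum.inl l, n => l[n]?
  | Sum.inr f, n => some (f n)

section Chase
variable {I : Type} (jmp : I → Option ℕ) (s : ℕ → Option I)

/-- The target of the strict forward jump (if any) at position `i`. -/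
def jumpTarget (i : ℕ) : Option ℕ :=
  match s i with
  | some u =>
    match jmp u with
    | some (l + 1) => some (i + (l + 1))
    | _ => none
  | none => none

/-- Iterated jump-following from position `i` (stabilising at non-jumps). -/
def chaseIter (i : ℕ) : ℕ → ℕ
  | 0 => i
  | k + 1 =>
    match jumpTarget jmp s (chaseIter i k) with
    | some j => j
    | none => chaseIter i k

/-- Follow the chain of strict forward jumps from position `i`; `none` when
`i` begins an infinite chain of forward jumps. -/
noncomputable def chase (i : ℕ) : Option ℕ := by
  classical
  exact if h : ∃ k, jumpTarget jmp s (chaseIter jmp s i k) = none then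
    some (chaseIter jmp s i (Nat.find h)) else none

end Chase

def PrimInstr.jmp {B : Type} : PrimInstr B → Option ℕ
  | .jump l => some l
  | _ => none


/-- The one-step behaviour of the instruction sequence `s` at position `i`. -/
noncomputable def extrStep {B : Type} (s : ℕ → Option (PrimInstr B)) (i : ℕ) :
    Step B ℕ :=
  match chase PrimInstr.jmp s i with
  | none => .dead
  | some j =>
    match s j with
    | none => .dead
    | some (.basic a) => .node (j + 1) a (j + 1)
    | some (.postest a) => .node (j + 1) a (j + 2)
    | some (.negtest a) => .node (j + 2) a (j + 1)
    | some (.jump _) => .dead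
    | some .halt => .term

/-- Thread extraction: the thread produced by a closed PGA term on execution. -/
noncomputable def PGA.extract {B : Type} (P : PGA (PrimInstr B)) : Thread B :=
  Thread.unfold (extrStep (InstrSeq.toFun P.den)) 0

/-- Primitive instructions of PGLD over a set `B` of basic instructions:
plain basic, positive test, negative test, and absolute jump instructions. -/
inductive PGLDInstr (B : Type) : Type where
  | basic : B → PGLDInstr B
  | postest : B → PGLDInstr B
  | negtest : B → PGLDInstr B
  | ajump : ℕ → PGLDInstr B

/-- The function `ψ_j` (for a PGLD program of length `k`) translating the
`j`-th PGLD instruction into a PGA instruction. -/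
def psi {B : Type} (k j : ℕ) : PGLDInstr B → PrimInstr B
  | .basic a => .basic a
  | .postest a => .postest a
  | .negtest a => .negtest a
  | .ajump l =>
    if j ≤ l ∧ l ≤ k then .jump (l - j)
    else if 0 < l ∧ l < j then .jump (k + 2 - (j - l))
    else .halt

/-- The projection `pgldpga`:
`pgldpga(u_1;...;u_k) = (ψ_1(u_1);...;ψ_k(u_k);!;!)^ω`. -/
def pgldpga {B : Type} (P : List (PGLDInstr B)) : PGA (PrimInstr B) :=
  .rep (((P.mapIdx fun idx u => psi P.length (idx + 1) u) ++
      [PrimInstr.halt]).foldr (fun u t => .concat (.instr u) t)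
      (.instr PrimInstr.halt))

section PGLDBehaviour
variable {B : Type} (P : List (PGLDInstr B))

/-- The target of the (absolute) jump instruction (if any) at position `j`
(positions are 1-based; positions 0 and > length carry no instruction). -/
def pgldJumpTarget (j : ℕ) : Option ℕ :=
  if j = 0 then none
  else
    match P[j - 1]? with
    | some (.ajump l) => some l
    | _ => none

def pgldChaseIter (j : ℕ) : ℕ → ℕ
  | 0 => j
  | k + 1 =>
    match pgldJumpTarget P (pgldChaseIter j k) with
    | some j' => j'
    | none => pgldChaseIter j k

/-- Follow the chain of jump instructions from position `j`; `none` when `j`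
begins an infinite chain of jump instructions. -/
noncomputable def pgldChase (j : ℕ) : Option ℕ := by
  classical
  exact if h : ∃ k, pgldJumpTarget P (pgldChaseIter P j k) = none then
    some (pgldChaseIter P j (Nat.find h)) else none

/-- The one-step behaviour of the PGLD program `P` at position `j`. -/
noncomputable def pgldStep (j : ℕ) : Step B ℕ :=
  match pgldChase P j with
  | none => .dead
  | some j' =>
    if j' = 0 then .term
    else
      match P[j' - 1]? with
      | none => .term
      | some (.basic a) => .node (j' + 1) a (j' + 1)
      | some (.postest a) => .node (j' + 1) a (j' + 2)
      | some (.negtest a) => .node (j' + 2) a (j' + 1)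
      | some (.ajump _) => .dead

/-- The behaviour of a PGLD program: the thread `|1, P|`. -/
noncomputable def pgldBehaviour : Thread B :=
  Thread.unfold (pgldStep P) 1

end PGLDBehaviour


/- ------------------------------------------------------------------ -/
/- Auxiliary development for the correctness proof                     -/
/- ------------------------------------------------------------------ -/

theorem Thread.ext' {A : Type} {x y : Thread A} (h : x.approx = y.approx) : x = y := by
  cases x; cases y; cases h; rfl

def mapStep {A S T : Type} (φ : S → T) : Step A S → Step A T
  | .dead => .dead
  | .term => .term
  | .node s a t => .node (φ s) a (φ t)

theorem unfoldAux_sim {A S T : Type} (f : S → Step A S) (g : T → Step A T) (φ : S → T)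
    (h : ∀ s, mapStep φ (f s) = g (φ s)) : ∀ n s, unfoldAux f n s = unfoldAux g n (φ s) := by
  intro n
  induction n with
  | zero => intro s; rfl
  | succ n ih =>
    intro s
    show stepApply (unfoldAux f n) (f s) = stepApply (unfoldAux g n) (g (φ s))
    rw [← h s]
    cases f s <;> simp [mapStep, stepApply, ih]

section ChaseLemmas
variable {I : Type} (jmp : I → Option ℕ) (s : ℕ → Option I)

theorem chaseIter_zero (i : ℕ) : chaseIter jmp s i 0 = i := rfl

theorem chaseIter_succ (i n : ℕ) : chaseIter jmp s i (n+1) =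
    match jumpTarget jmp s (chaseIter jmp s i n) with
    | some j => j
    | none => chaseIter jmp s i n := rfl

theorem chaseIter_step {i j : ℕ} (h : jumpTarget jmp s i = some j) :
    ∀ n, chaseIter jmp s i (n + 1) = chaseIter jmp s j n := by
  intro n
  induction n with
  | zero => rw [chaseIter_succ, chaseIter_zero, h]; rfl
  | succ n ih => rw [chaseIter_succ, ih, ← chaseIter_succ]

theorem chase_stop {i : ℕ} (h : jumpTarget jmp s i = none) : chase jmp s i = some i := by
  have he : ∃ k, jumpTarget jmp s (chaseIter jmp s i k) = none := ⟨0, h⟩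
  unfold chase
  rw [dif_pos he]
  congr 1
  have h0 : Nat.find he = 0 := (Nat.find_eq_zero he).mpr h
  rw [h0]; rfl

theorem chase_step {i j : ℕ} (h : jumpTarget jmp s i = some j) :
    chase jmp s i = chase jmp s j := by
  unfold chase
  by_cases hj : ∃ n, jumpTarget jmp s (chaseIter jmp s j n) = none
  · have hi : ∃ n, jumpTarget jmp s (chaseIter jmp s i n) = none :=
      ⟨Nat.find hj + 1, by rw [chaseIter_step jmp s h]; exact Nat.find_spec hj⟩
    rw [dif_pos hi, dif_pos hj]
    have h0 : Nat.find hi ≠ 0 := by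
      intro h0
      have hsp := Nat.find_spec hi
      rw [h0, chaseIter_zero, h] at hsp
      exact Option.some_ne_none _ hsp
    obtain ⟨t, ht⟩ : ∃ t, Nat.find hi = t + 1 := ⟨Nat.find hi - 1, by omega⟩
    have h2 : Nat.find hj ≤ t := by
      apply Nat.find_le
      rw [← chaseIter_step jmp s h, ← ht]
      exact Nat.find_spec hi
    have h1 : Nat.find hi ≤ Nat.find hj + 1 :=
      Nat.find_le (by rw [chaseIter_step jmp s h]; exact Nat.find_spec hj)
    have h3 : Nat.find hj = t := by omega
    rw [ht, h3, chaseIter_step jmp s h]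
  · have hi : ¬ ∃ n, jumpTarget jmp s (chaseIter jmp s i n) = none := by
      rintro ⟨n, hn⟩
      match n with
      | 0 => rw [chaseIter_zero, h] at hn; exact Option.some_ne_none _ hn
      | n + 1 => rw [chaseIter_step jmp s h] at hn; exact hj ⟨n, hn⟩
    rw [dif_neg hi, dif_neg hj]

theorem chase_none {i : ℕ} (h : ¬ ∃ n, jumpTarget jmp s (chaseIter jmp s i n) = none) :
    chase jmp s i = none := by
  unfold chase; rw [dif_neg h]

end ChaseLemmas

section PgldChaseLemmas
variable {B : Type} (P : List (PGLDInstr B))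

theorem pgldChaseIter_zero (j : ℕ) : pgldChaseIter P j 0 = j := rfl

theorem pgldChaseIter_succ (j n : ℕ) : pgldChaseIter P j (n+1) =
    match pgldJumpTarget P (pgldChaseIter P j n) with
    | some j' => j'
    | none => pgldChaseIter P j n := rfl

theorem pgldChaseIter_step {j j' : ℕ} (h : pgldJumpTarget P j = some j') :
    ∀ n, pgldChaseIter P j (n + 1) = pgldChaseIter P j' n := by
  intro n
  induction n with
  | zero => rw [pgldChaseIter_succ, pgldChaseIter_zero, h]; rfl
  | succ n ih => rw [pgldChaseIter_succ, ih, ← pgldChaseIter_succ]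

theorem pgldChase_stop {j : ℕ} (h : pgldJumpTarget P j = none) : pgldChase P j = some j := by
  have he : ∃ k, pgldJumpTarget P (pgldChaseIter P j k) = none := ⟨0, h⟩
  unfold pgldChase
  rw [dif_pos he]
  congr 1
  have h0 : Nat.find he = 0 := (Nat.find_eq_zero he).mpr h
  rw [h0]; rfl

theorem pgldChase_step {j j' : ℕ} (h : pgldJumpTarget P j = some j') :
    pgldChase P j = pgldChase P j' := by
  unfold pgldChase
  by_cases hj : ∃ n, pgldJumpTarget P (pgldChaseIter P j' n) = none
  · have hi : ∃ n, pgldJumpTarget P (pgldChaseIter P j n) = none :=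
      ⟨Nat.find hj + 1, by rw [pgldChaseIter_step P h]; exact Nat.find_spec hj⟩
    rw [dif_pos hi, dif_pos hj]
    have h0 : Nat.find hi ≠ 0 := by
      intro h0
      have hsp := Nat.find_spec hi
      rw [h0, pgldChaseIter_zero, h] at hsp
      exact Option.some_ne_none _ hsp
    obtain ⟨t, ht⟩ : ∃ t, Nat.find hi = t + 1 := ⟨Nat.find hi - 1, by omega⟩
    have h2 : Nat.find hj ≤ t := by
      apply Nat.find_le
      rw [← pgldChaseIter_step P h, ← ht]
      exact Nat.find_spec hi
    have h1 : Nat.find hi ≤ Nat.find hj + 1 :=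
      Nat.find_le (by rw [pgldChaseIter_step P h]; exact Nat.find_spec hj)
    have h3 : Nat.find hj = t := by omega
    rw [ht, h3, pgldChaseIter_step P h]
  · have hi : ¬ ∃ n, pgldJumpTarget P (pgldChaseIter P j n) = none := by
      rintro ⟨n, hn⟩
      match n with
      | 0 => rw [pgldChaseIter_zero, h] at hn; exact Option.some_ne_none _ hn
      | n + 1 => rw [pgldChaseIter_step P h] at hn; exact hj ⟨n, hn⟩
    rw [dif_neg hi, dif_neg hj]

theorem pgldChase_none {j : ℕ} (h : ¬ ∃ n, pgldJumpTarget P (pgldChaseIter P j n) = none) :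
    pgldChase P j = none := by
  unfold pgldChase; rw [dif_neg h]

theorem pgldChase_self {j : ℕ} (h : pgldJumpTarget P j = some j) : pgldChase P j = none := by
  have hiter : ∀ n, pgldChaseIter P j n = j := by
    intro n
    induction n with
    | zero => rfl
    | succ n ih => rw [pgldChaseIter_succ, ih, h]
  apply pgldChase_none
  rintro ⟨n, hn⟩
  rw [hiter n, h] at hn
  exact Option.some_ne_none _ hn

end PgldChaseLemmas

theorem extrStep_congr {B : Type} (s : ℕ → Option (PrimInstr B)) {i j : ℕ}
    (h : jumpTarget PrimInstr.jmp s i = some j) : extrStep s i = extrStep s j := by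
  unfold extrStep; rw [chase_step _ _ h]

theorem pgldStep_congr {B : Type} (P : List (PGLDInstr B)) {i j : ℕ}
    (h : pgldJumpTarget P i = some j) : pgldStep P i = pgldStep P j := by
  unfold pgldStep; rw [pgldChase_step P h]

theorem extrStep_dead {B : Type} (s : ℕ → Option (PrimInstr B)) {i : ℕ}
    (h : chase PrimInstr.jmp s i = none) : extrStep s i = .dead := by
  unfold extrStep; rw [h]

theorem pgldStep_dead {B : Type} (P : List (PGLDInstr B)) {j : ℕ}
    (h : pgldChase P j = none) : pgldStep P j = .dead := by
  unfold pgldStep; rw [h]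

/- The concrete instruction sequence of `pgldpga P`. -/

def progList {B : Type} (P : List (PGLDInstr B)) : List (PrimInstr B) :=
  (P.mapIdx fun idx u => psi P.length (idx + 1) u) ++ [.halt, .halt]

theorem progList_length {B : Type} (P : List (PGLDInstr B)) :
    (progList P).length = P.length + 2 := by
  simp [progList]

def seqP {B : Type} (P : List (PGLDInstr B)) : ℕ → Option (PrimInstr B) := fun i =>
  some ((progList P).getD (i % (P.length + 2)) .halt)

def phi {B : Type} (P : List (PGLDInstr B)) (i : ℕ) : ℕ := i % (P.length + 2) + 1

theorem phi_ne {B : Type} (P : List (PGLDInstr B)) (i : ℕ) : ¬ phi P i = 0 := by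
  simp [phi]

theorem phi_sub {B : Type} (P : List (PGLDInstr B)) (i : ℕ) :
    phi P i - 1 = i % (P.length + 2) := rfl

theorem den_fold {B : Type} (b : PrimInstr B) (l : List (PrimInstr B)) :
    (l.foldr (fun u t => PGA.concat (.instr u) t) (.instr b)).den = Sum.inl (l ++ [b]) := by
  induction l with
  | nil => rfl
  | cons a l ih => simp [PGA.den, ih]; rfl

theorem toFun_pgldpga {B : Type} (P : List (PGLDInstr B)) :
    InstrSeq.toFun (pgldpga P).den = seqP P := by
  obtain ⟨a, L, hL⟩ : ∃ a L, progList P = a :: L := by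
    cases hq : progList P with
    | nil =>
      have := progList_length P
      rw [hq] at this
      simp at this
    | cons a L => exact ⟨a, L, rfl⟩
  have h1 : (((P.mapIdx fun idx u => psi P.length (idx + 1) u) ++
      [PrimInstr.halt]).foldr (fun u t => PGA.concat (PGA.instr u) t)
      (PGA.instr PrimInstr.halt)).den = Sum.inl (a :: L) := by
    rw [den_fold, ← hL]
    simp [progList]
  have h2 : (pgldpga P).den = Sum.inr (fun n => (a :: L).getD (n % (a :: L).length) a) := by
    unfold pgldpga
    simp only [PGA.den]
    rw [h1]
  funext i
  rw [h2]
  have hlen : (a :: L).length = P.length + 2 := by rw [← hL]; exact progList_length P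
  have hlt : i % (P.length + 2) < (progList P).length := by
    rw [progList_length]; exact Nat.mod_lt _ (by omega)
  show some ((a :: L).getD (i % (a :: L).length) a) = seqP P i
  rw [hlen, ← hL]
  unfold seqP
  rw [List.getD_eq_getElem _ _ hlt, List.getD_eq_getElem _ _ hlt]

theorem seqP_lt {B : Type} (P : List (PGLDInstr B)) (i : ℕ)
    (h : i % (P.length + 2) < P.length) :
    seqP P i = some (psi P.length (i % (P.length + 2) + 1) (P[i % (P.length + 2)]'h)) := by
  have h1 : i % (P.length + 2) < (P.mapIdx fun idx u => psi P.length (idx + 1) u).length := by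
    simpa using h
  have hlt : i % (P.length + 2) < (progList P).length := by
    rw [progList_length]; omega
  unfold seqP
  rw [List.getD_eq_getElem _ _ hlt]
  congr 1
  simp only [progList]
  rw [List.getElem_append_left h1, List.getElem_mapIdx]

theorem seqP_ge {B : Type} (P : List (PGLDInstr B)) (i : ℕ)
    (h : P.length ≤ i % (P.length + 2)) :
    seqP P i = some PrimInstr.halt := by
  have hm : i % (P.length + 2) < P.length + 2 := Nat.mod_lt _ (by omega)
  have hlt : i % (P.length + 2) < (progList P).length := by
    rw [progList_length]; omega
  have h1 : (P.mapIdx fun idx u => psi P.length (idx + 1) u).length ≤ i % (P.length + 2) := by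
    simpa using h
  unfold seqP
  rw [List.getD_eq_getElem _ _ hlt]
  congr 1
  simp only [progList]
  rw [List.getElem_append_right h1]
  simp only [List.length_mapIdx]
  have h2 : i % (P.length + 2) - P.length = 0 ∨ i % (P.length + 2) - P.length = 1 := by omega
  rcases h2 with h2 | h2 <;> simp [h2]

theorem add_mod_lt' (i c m : ℕ) (h : i % m + c < m) : (i + c) % m = i % m + c := by
  rw [Nat.add_mod, Nat.mod_eq_of_lt (show c < m by omega), Nat.mod_eq_of_lt h]

theorem add_mod_wrap (i c m x : ℕ) (hc : c < m) (hx : x < m) (h : i % m + c = m + x) :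
    (i + c) % m = x := by
  rw [Nat.add_mod, Nat.mod_eq_of_lt hc, h, Nat.add_mod_left, Nat.mod_eq_of_lt hx]

/- The terminal (non-jump) case of the simulation. -/
theorem terminal_case {B : Type} (P : List (PGLDInstr B)) (i : ℕ)
    (h : jumpTarget PrimInstr.jmp (seqP P) i = none) :
    mapStep (phi P) (extrStep (seqP P) i) = pgldStep P (phi P i) := by
  have hm : (0:ℕ) < P.length + 2 := by omega
  have hrm : i % (P.length + 2) < P.length + 2 := Nat.mod_lt _ hm
  have hchase : chase PrimInstr.jmp (seqP P) i = some i := chase_stop _ _ h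
  by_cases hrk : i % (P.length + 2) < P.length
  · have hs := seqP_lt P i hrk
    have hPr : P[i % (P.length + 2)]? = some (P[i % (P.length + 2)]'hrk) :=
      List.getElem?_eq_getElem hrk
    cases hu : P[i % (P.length + 2)]'hrk with
    | basic a =>
      rw [hu] at hs hPr
      have hjt : pgldJumpTarget P (phi P i) = none := by
        unfold pgldJumpTarget
        rw [if_neg (phi_ne P i), phi_sub, hPr]
      have hm1 : phi P (i+1) = phi P i + 1 := by
        unfold phi
        rw [add_mod_lt' i 1 _ (by omega)]
      unfold extrStep pgldStep
      simp only [hchase, hs, psi, pgldChase_stop P hjt, if_neg (phi_ne P i), phi_sub, hPr,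
        mapStep, hm1]
    | postest a =>
      rw [hu] at hs hPr
      have hjt : pgldJumpTarget P (phi P i) = none := by
        unfold pgldJumpTarget
        rw [if_neg (phi_ne P i), phi_sub, hPr]
      have hm1 : phi P (i+1) = phi P i + 1 := by
        unfold phi
        rw [add_mod_lt' i 1 _ (by omega)]
      have hm2 : phi P (i+2) = phi P i + 2 := by
        unfold phi
        rw [add_mod_lt' i 2 _ (by omega)]
      unfold extrStep pgldStep
      simp only [hchase, hs, psi, pgldChase_stop P hjt, if_neg (phi_ne P i), phi_sub, hPr,
        mapStep, hm1, hm2]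
    | negtest a =>
      rw [hu] at hs hPr
      have hjt : pgldJumpTarget P (phi P i) = none := by
        unfold pgldJumpTarget
        rw [if_neg (phi_ne P i), phi_sub, hPr]
      have hm1 : phi P (i+1) = phi P i + 1 := by
        unfold phi
        rw [add_mod_lt' i 1 _ (by omega)]
      have hm2 : phi P (i+2) = phi P i + 2 := by
        unfold phi
        rw [add_mod_lt' i 2 _ (by omega)]
      unfold extrStep pgldStep
      simp only [hchase, hs, psi, pgldChase_stop P hjt, if_neg (phi_ne P i), phi_sub, hPr,
        mapStep, hm1, hm2]
    | ajump l =>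
      rw [hu] at hs hPr
      have hjt2 : pgldJumpTarget P (phi P i) = some l := by
        unfold pgldJumpTarget
        rw [if_neg (phi_ne P i), phi_sub, hPr]
      by_cases hc1 : i % (P.length + 2) + 1 ≤ l ∧ l ≤ P.length
      · by_cases hll : l = i % (P.length + 2) + 1
        · have hj0 : l - (i % (P.length + 2) + 1) = 0 := by omega
          have hpsi : psi (B := B) P.length (i % (P.length + 2) + 1) (PGLDInstr.ajump l)
              = PrimInstr.jump 0 := by
            simp only [psi]
            rw [if_pos hc1, hj0]
          rw [hpsi] at hs
          have hself : pgldJumpTarget P (phi P i) = some (phi P i) := by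
            rw [hjt2, hll]; rfl
          rw [pgldStep_dead P (pgldChase_self P hself)]
          unfold extrStep
          simp only [hchase, hs, mapStep]
        · exfalso
          obtain ⟨d, hd⟩ : ∃ d, l - (i % (P.length + 2) + 1) = d + 1 :=
            ⟨l - (i % (P.length + 2) + 1) - 1, by omega⟩
          have hpsi : psi (B := B) P.length (i % (P.length + 2) + 1) (PGLDInstr.ajump l)
              = PrimInstr.jump (d + 1) := by
            simp only [psi]
            rw [if_pos hc1, hd]
          rw [hpsi] at hs
          unfold jumpTarget at h
          rw [hs] at h
          simp [PrimInstr.jmp] at h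
      · by_cases hc2 : 0 < l ∧ l < i % (P.length + 2) + 1
        · exfalso
          obtain ⟨d, hd⟩ : ∃ d, P.length + 2 - (i % (P.length + 2) + 1 - l) = d + 1 :=
            ⟨P.length + 2 - (i % (P.length + 2) + 1 - l) - 1, by omega⟩
          have hpsi : psi (B := B) P.length (i % (P.length + 2) + 1) (PGLDInstr.ajump l)
              = PrimInstr.jump (d + 1) := by
            simp only [psi]
            rw [if_neg hc1, if_pos hc2, hd]
          rw [hpsi] at hs
          unfold jumpTarget at h
          rw [hs] at h
          simp [PrimInstr.jmp] at h
        · have hl : l = 0 ∨ P.length < l := by omega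
          have hpsi : psi (B := B) P.length (i % (P.length + 2) + 1) (PGLDInstr.ajump l)
              = PrimInstr.halt := by
            simp only [psi]
            rw [if_neg hc1, if_neg hc2]
          rw [hpsi] at hs
          have hjtl : pgldJumpTarget P l = none := by
            unfold pgldJumpTarget
            rcases hl with hl | hl
            · rw [if_pos hl]
            · rw [if_neg (by omega), List.getElem?_eq_none (by omega)]
          unfold extrStep pgldStep
          rw [pgldChase_step P hjt2]
          simp only [hchase, hs, pgldChase_stop P hjtl, mapStep]
          rcases hl with hl | hl
          · rw [hl]; rfl
          · rw [if_neg (by omega), List.getElem?_eq_none (by omega)]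
  · have hs := seqP_ge P i (by omega)
    have hjt : pgldJumpTarget P (phi P i) = none := by
      unfold pgldJumpTarget
      rw [if_neg (phi_ne P i), phi_sub, List.getElem?_eq_none (by omega)]
    unfold extrStep pgldStep
    simp only [hchase, hs, pgldChase_stop P hjt, if_neg (phi_ne P i), phi_sub,
      List.getElem?_eq_none (show P.length ≤ i % (P.length + 2) by omega), mapStep]

/- A PGA jump corresponds to a PGLD jump. -/
theorem jt_some {B : Type} (P : List (PGLDInstr B)) (i i' : ℕ)
    (h : jumpTarget PrimInstr.jmp (seqP P) i = some i') :
    pgldJumpTarget P (phi P i) = some (phi P i') := by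
  have hm : (0:ℕ) < P.length + 2 := by omega
  have hrm : i % (P.length + 2) < P.length + 2 := Nat.mod_lt _ hm
  by_cases hrk : i % (P.length + 2) < P.length
  · have hs := seqP_lt P i hrk
    have hPr : P[i % (P.length + 2)]? = some (P[i % (P.length + 2)]'hrk) :=
      List.getElem?_eq_getElem hrk
    unfold jumpTarget at h
    rw [hs] at h
    cases hu : P[i % (P.length + 2)]'hrk with
    | basic a => rw [hu] at h; simp [psi, PrimInstr.jmp] at h
    | postest a => rw [hu] at h; simp [psi, PrimInstr.jmp] at h
    | negtest a => rw [hu] at h; simp [psi, PrimInstr.jmp] at h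
    | ajump l =>
      rw [hu] at h hPr
      have hjt2 : pgldJumpTarget P (phi P i) = some l := by
        unfold pgldJumpTarget
        rw [if_neg (phi_ne P i), phi_sub, hPr]
      rw [hjt2]
      by_cases hc1 : i % (P.length + 2) + 1 ≤ l ∧ l ≤ P.length
      · by_cases hll : l = i % (P.length + 2) + 1
        · exfalso
          have hj0 : l - (i % (P.length + 2) + 1) = 0 := by omega
          simp [psi, hc1, hj0, PrimInstr.jmp] at h
        · obtain ⟨d, hd⟩ : ∃ d, l - (i % (P.length + 2) + 1) = d + 1 :=
            ⟨l - (i % (P.length + 2) + 1) - 1, by omega⟩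
          simp [psi, hc1, hd, PrimInstr.jmp] at h
          have hmod : (i + (d + 1)) % (P.length + 2) = l - 1 := by
            rw [add_mod_lt' i (d+1) (P.length+2) (by omega)]
            omega
          rw [← h]
          unfold phi
          rw [hmod]
          congr 1
          omega
      · by_cases hc2 : 0 < l ∧ l < i % (P.length + 2) + 1
        · obtain ⟨d, hd⟩ : ∃ d, P.length + 2 - (i % (P.length + 2) + 1 - l) = d + 1 :=
            ⟨P.length + 2 - (i % (P.length + 2) + 1 - l) - 1, by omega⟩
          simp only [psi] at h; rw [if_neg hc1, if_pos hc2, hd] at h; simp [PrimInstr.jmp] at h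
          have hmod : (i + (d + 1)) % (P.length + 2) = l - 1 := by
            apply add_mod_wrap <;> omega
          rw [← h]
          unfold phi
          rw [hmod]
          congr 1
          omega
        · exfalso
          simp only [psi] at h; rw [if_neg hc1, if_neg hc2] at h; simp [PrimInstr.jmp] at h
  · exfalso
    unfold jumpTarget at h
    rw [seqP_ge P i (by omega)] at h
    simp [PrimInstr.jmp] at h

/- No PGLD jump means no PGA jump. -/
theorem jt_none {B : Type} (P : List (PGLDInstr B)) (i : ℕ)
    (h : pgldJumpTarget P (phi P i) = none) :
    jumpTarget PrimInstr.jmp (seqP P) i = none := by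
  have hm : (0:ℕ) < P.length + 2 := by omega
  have hrm : i % (P.length + 2) < P.length + 2 := Nat.mod_lt _ hm
  by_cases hrk : i % (P.length + 2) < P.length
  · have hs := seqP_lt P i hrk
    have hPr : P[i % (P.length + 2)]? = some (P[i % (P.length + 2)]'hrk) :=
      List.getElem?_eq_getElem hrk
    unfold pgldJumpTarget at h
    rw [if_neg (phi_ne P i), phi_sub, hPr] at h
    unfold jumpTarget
    rw [hs]
    cases hu : P[i % (P.length + 2)]'hrk with
    | basic a => simp [psi, PrimInstr.jmp]
    | postest a => simp [psi, PrimInstr.jmp]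
    | negtest a => simp [psi, PrimInstr.jmp]
    | ajump l => exfalso; rw [hu] at h; simp at h
  · unfold jumpTarget
    rw [seqP_ge P i (by omega)]
    simp [PrimInstr.jmp]

/- A PGLD jump out of range corresponds to a halt instruction. -/
theorem halt_of_out {B : Type} (P : List (PGLDInstr B)) (i l : ℕ)
    (hjt : pgldJumpTarget P (phi P i) = some l) (hl : l = 0 ∨ P.length < l) :
    jumpTarget PrimInstr.jmp (seqP P) i = none := by
  have hm : (0:ℕ) < P.length + 2 := by omega
  have hrm : i % (P.length + 2) < P.length + 2 := Nat.mod_lt _ hm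
  unfold pgldJumpTarget at hjt
  rw [if_neg (phi_ne P i), phi_sub] at hjt
  by_cases hrk : i % (P.length + 2) < P.length
  · have hs := seqP_lt P i hrk
    have hPr : P[i % (P.length + 2)]? = some (P[i % (P.length + 2)]'hrk) :=
      List.getElem?_eq_getElem hrk
    rw [hPr] at hjt
    cases hu : P[i % (P.length + 2)]'hrk with
    | basic a => rw [hu] at hjt; simp at hjt
    | postest a => rw [hu] at hjt; simp at hjt
    | negtest a => rw [hu] at hjt; simp at hjt
    | ajump l' =>
      rw [hu] at hjt hs
      rw [show l' = l by simpa using hjt] at hs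
      have hpsi : psi (B := B) P.length (i % (P.length + 2) + 1) (PGLDInstr.ajump l)
          = PrimInstr.halt := by
        simp only [psi]
        rw [if_neg (by omega), if_neg (by omega)]
      rw [hpsi] at hs
      unfold jumpTarget
      rw [hs]
      rfl
  · rw [List.getElem?_eq_none (by omega)] at hjt
    simp at hjt

/- An in-range, non-self PGLD jump corresponds to a PGA jump. -/
theorem jt_back {B : Type} (P : List (PGLDInstr B)) (i l : ℕ)
    (hjt : pgldJumpTarget P (phi P i) = some l)
    (hl1 : 1 ≤ l) (hl2 : l ≤ P.length) (hne : l ≠ phi P i) :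
    ∃ i', jumpTarget PrimInstr.jmp (seqP P) i = some i' ∧ phi P i' = l := by
  have hm : (0:ℕ) < P.length + 2 := by omega
  have hrm : i % (P.length + 2) < P.length + 2 := Nat.mod_lt _ hm
  have hphi : phi P i = i % (P.length + 2) + 1 := rfl
  unfold pgldJumpTarget at hjt
  rw [if_neg (phi_ne P i), phi_sub] at hjt
  by_cases hrk : i % (P.length + 2) < P.length
  · have hs := seqP_lt P i hrk
    have hPr : P[i % (P.length + 2)]? = some (P[i % (P.length + 2)]'hrk) :=
      List.getElem?_eq_getElem hrk
    rw [hPr] at hjt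
    cases hu : P[i % (P.length + 2)]'hrk with
    | basic a => rw [hu] at hjt; simp at hjt
    | postest a => rw [hu] at hjt; simp at hjt
    | negtest a => rw [hu] at hjt; simp at hjt
    | ajump l' =>
      rw [hu] at hjt hs
      rw [show l' = l by simpa using hjt] at hs
      by_cases hcase : i % (P.length + 2) + 1 ≤ l
      · obtain ⟨d, hd⟩ : ∃ d, l - (i % (P.length + 2) + 1) = d + 1 :=
          ⟨l - (i % (P.length + 2) + 1) - 1, by omega⟩
        have hpsi : psi (B := B) P.length (i % (P.length + 2) + 1) (PGLDInstr.ajump l)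
            = PrimInstr.jump (d + 1) := by
          simp only [psi]
          rw [if_pos ⟨hcase, hl2⟩, hd]
        rw [hpsi] at hs
        refine ⟨i + (d + 1), ?_, ?_⟩
        · unfold jumpTarget
          rw [hs]
          rfl
        · unfold phi
          rw [add_mod_lt' i (d+1) _ (by omega)]
          omega
      · obtain ⟨d, hd⟩ : ∃ d, P.length + 2 - (i % (P.length + 2) + 1 - l) = d + 1 :=
          ⟨P.length + 2 - (i % (P.length + 2) + 1 - l) - 1, by omega⟩
        have hpsi : psi (B := B) P.length (i % (P.length + 2) + 1) (PGLDInstr.ajump l)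
            = PrimInstr.jump (d + 1) := by
          simp only [psi]
          rw [if_neg (by omega), if_pos ⟨by omega, by omega⟩, hd]
        rw [hpsi] at hs
        refine ⟨i + (d + 1), ?_, ?_⟩
        · unfold jumpTarget
          rw [hs]
          rfl
        · unfold phi
          rw [add_mod_wrap i (d+1) _ (l-1) (by omega) (by omega) (by omega)]
          omega
  · rw [List.getElem?_eq_none (by omega)] at hjt
    simp at hjt

theorem pos_case {B : Type} (P : List (PGLDInstr B)) :
    ∀ n i, jumpTarget PrimInstr.jmp (seqP P)
        (chaseIter PrimInstr.jmp (seqP P) i n) = none →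
      mapStep (phi P) (extrStep (seqP P) i) = pgldStep P (phi P i) := by
  intro n
  induction n with
  | zero => intro i h; exact terminal_case P i h
  | succ n ih =>
    intro i h
    cases hjt : jumpTarget PrimInstr.jmp (seqP P) i with
    | none => exact terminal_case P i hjt
    | some i' =>
      rw [chaseIter_step _ _ hjt] at h
      have hp := jt_some P i i' hjt
      rw [extrStep_congr _ hjt, pgldStep_congr P hp]
      exact ih i' h

theorem neg_case {B : Type} (P : List (PGLDInstr B)) :
    ∀ n i, pgldJumpTarget P (pgldChaseIter P (phi P i) n) = none →
      ∃ n', jumpTarget PrimInstr.jmp (seqP P)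
        (chaseIter PrimInstr.jmp (seqP P) i n') = none := by
  intro n
  induction n with
  | zero => intro i h; exact ⟨0, jt_none P i h⟩
  | succ n ih =>
    intro i h
    cases hjt : pgldJumpTarget P (phi P i) with
    | none => exact ⟨0, jt_none P i hjt⟩
    | some l =>
      by_cases hl0 : l = 0 ∨ P.length < l
      · exact ⟨0, halt_of_out P i l hjt hl0⟩
      · by_cases hself : l = phi P i
        · exfalso
          have hiter : ∀ t, pgldChaseIter P (phi P i) t = phi P i := by
            intro t
            induction t with
            | zero => rfl
            | succ t iht => rw [pgldChaseIter_succ, iht, hjt, hself]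
          rw [hiter, hjt] at h
          exact Option.some_ne_none _ h
        · obtain ⟨i', hji', hphi'⟩ := jt_back P i l hjt (by omega) (by omega) hself
          rw [pgldChaseIter_step P hjt] at h
          rw [← hphi'] at h
          obtain ⟨n', hn'⟩ := ih i' h
          exact ⟨n' + 1, by rw [chaseIter_step _ _ hji']; exact hn'⟩

theorem step_sim {B : Type} (P : List (PGLDInstr B)) (i : ℕ) :
    mapStep (phi P) (extrStep (seqP P) i) = pgldStep P (phi P i) := by
  by_cases h : ∃ n, jumpTarget PrimInstr.jmp (seqP P)
      (chaseIter PrimInstr.jmp (seqP P) i n) = none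
  · obtain ⟨n, hn⟩ := h
    exact pos_case P n i hn
  · have h1 : chase PrimInstr.jmp (seqP P) i = none := chase_none _ _ h
    have h2 : pgldChase P (phi P i) = none := by
      apply pgldChase_none
      rintro ⟨n, hn⟩
      exact h (neg_case P n i hn)
    rw [extrStep_dead _ h1, pgldStep_dead P h2]
    rfl

/-- For every PGLD program `P = u_1;...;u_k`, the thread
`|pgldpga(P)|` extracted from the PGA program `pgldpga(P)` equals the
behaviour of `P`. -/
theorem pgldpga_correct (B : Type) [Finite B]
    (P : List (PGLDInstr B)) (hP : P ≠ []) :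
    (pgldpga P).extract = pgldBehaviour P := by
  unfold PGA.extract pgldBehaviour
  rw [toFun_pgldpga]
  apply Thread.ext'
  funext n
  show unfoldAux (extrStep (seqP P)) n 0 = unfoldAux (pgldStep P) n 1
  rw [unfoldAux_sim (extrStep (seqP P)) (pgldStep P) (phi P) (step_sim P) n 0]
  have hphi0 : phi P 0 = 1 := by simp [phi]
  rw [hphi0]
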